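/- For any permutations σ ≤ π in the permutation pattern poset 𝒫, the Möbius function satisfies μ(σ,π) = (−1)^{|π|−|σ|}·NE(σ,π) + Σ_{λ : σ ≤ λ < π} μ(σ,λ) · Σ_{S ∈ EZ^{λ,π}} (−1)^{|S|}. -/

import Mathlib

open scoped Classical

set_option maxHeartbeats 1000000

/-! ## The permutation pattern poset -/

/-- The type of all (finite) permutations: a permutation of length `n` is an element of
`Equiv.Perm (Fin n)`; the letter in position `i` is `p.2 i` (letters compared via the
order on `Fin n`). -/
abbrev PermPat : Type := Σ n : ℕ, Equiv.Perm (Fin n)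

/-- Pattern containment: `PatLe σ π` iff `π` has a subsequence in the same relative order
as `σ`, i.e. there is an occurrence of `σ` in `π`. -/
def PatLe (p q : PermPat) : Prop :=
  ∃ f : Fin p.1 ↪o Fin q.1, ∀ i j : Fin p.1, p.2 i < p.2 j ↔ q.2 (f i) < q.2 (f j)

lemma patLe_refl (p : PermPat) : PatLe p p := by
  refine ⟨(OrderIso.refl (Fin p.1)).toOrderEmbedding, fun i j => ?_⟩
  simp

lemma patLe_trans {p q r : PermPat} (h1 : PatLe p q) (h2 : PatLe q r) : PatLe p r := by
  obtain ⟨f, hf⟩ := h1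
  obtain ⟨g, hg⟩ := h2
  exact ⟨f.trans g, fun i j => (hf i j).trans (hg (f i) (f j))⟩

lemma PatLe.len_le {p q : PermPat} (h : PatLe p q) : p.1 ≤ q.1 := by
  obtain ⟨f, -⟩ := h
  simpa using Fintype.card_le_of_embedding f.toEmbedding

lemma StrictMono.fin_apply_eq {n : ℕ} {f : Fin n → Fin n} (hf : StrictMono f) (i : Fin n) :
    f i = i := by
  have hle : ∀ m : ℕ, ∀ j : Fin n, j.val = m → j.val ≤ (f j).val := by
    intro m
    induction m with
    | zero => intro j hj; omega
    | succ m ih =>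
      intro j hj
      have hm : m < n := by omega
      have h1 : f ⟨m, hm⟩ < f j := hf (by simp [Fin.lt_def]; omega)
      have h2 := ih ⟨m, hm⟩ rfl
      simp only [Fin.lt_def] at h1
      simp only [Fin.val_mk] at h1 h2
      omega
  have hge : ∀ m : ℕ, ∀ j : Fin n, j.val + m + 1 = n → (f j).val ≤ j.val := by
    intro m
    induction m with
    | zero => intro j hj; have := (f j).isLt; omega
    | succ m ih =>
      intro j hj
      have hs : j.val + 1 < n := by omega
      have h1 : f j < f ⟨j.val + 1, hs⟩ := hf (by simp [Fin.lt_def])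
      have h2 := ih ⟨j.val + 1, hs⟩ (by simp only [Fin.val_mk]; omega)
      simp only [Fin.lt_def] at h1
      simp only [Fin.val_mk] at h1 h2
      omega
  exact Fin.ext (le_antisymm (hge (n - 1 - i.val) i (by have := i.isLt; omega)) (hle i.val i rfl))

lemma patLe_antisymm {p q : PermPat} (hpq : PatLe p q) (hqp : PatLe q p) : p = q := by
  obtain ⟨k, σ⟩ := p
  obtain ⟨n, π⟩ := q
  have hkn : k = n := le_antisymm hpq.len_le hqp.len_le
  subst hkn
  obtain ⟨f, hf⟩ := hpq
  have hfid : ∀ i, f i = i := fun i => f.strictMono.fin_apply_eq i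
  have key : ∀ i j : Fin k, σ i < σ j ↔ π i < π j := by
    intro i j
    simpa [hfid] using hf i j
  have hmono : StrictMono (fun a => π (σ.symm a)) := by
    intro a b hab
    have : σ (σ.symm a) < σ (σ.symm b) := by simpa using hab
    exact (key _ _).mp this
  have hid : ∀ a, π (σ.symm a) = a := fun a => hmono.fin_apply_eq a
  have hσπ : σ = π := by
    apply Equiv.ext
    intro x
    have := hid (σ x)
    simpa using this.symm
  rw [hσπ]

/-- The permutation pattern poset `𝒫`. -/
instance : PartialOrder PermPat where
  le := PatLe
  le_refl := patLe_refl
  le_trans _ _ _ := patLe_trans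
  le_antisymm _ _ := patLe_antisymm

lemma PermPat.le_def {p q : PermPat} : p ≤ q ↔ PatLe p q := Iff.rfl

/-! ## The Möbius function of the pattern poset

`permMu` is the Möbius function of the pattern poset: `μ(σ,σ) = 1`,
`μ(σ,π) = -∑_{σ ≤ z < π} μ(σ,z)` for `σ < π`, and `μ(σ,π) = 0` if `σ ≰ π`.
(Every `z < π` is of length strictly smaller than `π`, so the inner sum ranges over
the permutations of each length `m < |π|`.) -/
noncomputable def permMu (p q : PermPat) : ℤ :=
  if p = q then 1
  else if PatLe p q then
    - ∑ m : Fin q.1, ∑ z : Equiv.Perm (Fin m.1),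
        if PatLe p ⟨m.1, z⟩ ∧ PatLe ⟨m.1, z⟩ q then permMu p ⟨m.1, z⟩ else 0
  else 0
termination_by q.1
decreasing_by exact m.isLt

/-! ## The Möbius function of a finite poset -/

/-- The Möbius function `μ(a,b)` of a finite poset. -/
noncomputable def muPair {X : Type*} [PartialOrder X] [Fintype X] (a b : X) : ℤ :=
  if a = b then 1
  else if a ≤ b then
    - ∑ z ∈ (Finset.univ.filter fun z : X => a ≤ z ∧ z < b).attach, muPair a z.1
  else 0
termination_by Set.ncard {z : X | z < b}
decreasing_by
  rename_i z
  have hz : z.1 < b := ((Finset.mem_filter.mp z.2).2).2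
  exact Set.ncard_lt_ncard
    ((Set.ssubset_iff_of_subset (fun w hw => lt_trans hw hz)).mpr ⟨z.1, hz, fun hmem => absurd hmem (by exact lt_irrefl _)⟩)
    (Set.toFinite _)

instance instFiniteOption' {α : Type*} [Finite α] : Finite (Option α) :=
  Finite.of_equiv (α ⊕ PUnit.{1}) (Equiv.optionEquivSumPUnit.{0} α).symm
instance {α : Type*} [Finite α] : Finite (WithTop α) := inferInstanceAs (Finite (Option α))
instance {α : Type*} [Finite α] : Finite (WithBot α) := inferInstanceAs (Finite (Option α))
instance {α : Type*} [Fintype α] : Fintype (WithTop α) := inferInstanceAs (Fintype (Option α))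
instance {α : Type*} [Fintype α] : Fintype (WithBot α) := inferInstanceAs (Fintype (Option α))

/-- For a finite poset `X`, `muHat X` is `μ(0̂,1̂)` computed in the poset obtained from `X`
by adjoining a new bottom element `0̂` and a new top element `1̂`.  (For infinite `X` the
junk value `0` is returned.) -/
noncomputable def muHat (X : Type*) [PartialOrder X] : ℤ :=
  if h : Finite X then
    letI := h
    letI : Fintype (WithBot (WithTop X)) := Fintype.ofFinite _
    muPair (⊥ : WithBot (WithTop X)) ⊤
  else 0

/-! ## Adjacencies, embeddings, normality -/

/-- The position one step before `j` (or `j` itself when `j = 0`). -/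
def prevPos {n : ℕ} (j : Fin n) : Fin n := ⟨j.val - 1, lt_of_le_of_lt (Nat.sub_le _ _) j.isLt⟩

/-- `Linked π j` says position `j` is linked to the preceding position, i.e. the letters in
positions `j-1, j` have consecutive values.  These are exactly the positions lying in the
tail of some adjacency of `π` (an adjacency is a maximal factor of consecutively valued
increasing or decreasing letters; its tail is all but its first letter). -/
def Linked {n : ℕ} (π : Equiv.Perm (Fin n)) (j : Fin n) : Prop :=
  0 < j.val ∧ ((π j).val + 1 = (π (prevPos j)).val ∨ (π (prevPos j)).val + 1 = (π j).val)

/-- The number of adjacencies (maximal linked runs) of `π`. -/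
noncomputable def numBlocks {n : ℕ} (π : Equiv.Perm (Fin n)) : ℕ :=
  (Finset.univ.filter fun j : Fin n => ¬ Linked π j).card

/-- The index (starting from 0) of the adjacency of `π` containing position `j`. -/
noncomputable def blockIdx {n : ℕ} (π : Equiv.Perm (Fin n)) (j : Fin n) : ℕ :=
  (Finset.univ.filter fun m : Fin n => ¬ Linked π m ∧ m ≤ j).card - 1

/-- The set of positions in the `i`-th adjacency of `π`. -/
noncomputable def blockF {n : ℕ} (π : Equiv.Perm (Fin n)) (i : ℕ) : Finset (Fin n) :=
  Finset.univ.filter fun j => blockIdx π j = i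

/-- The standardization of an injective tuple `v` of values in `Fin n`: the permutation of
`Fin m` whose letters are in the same relative order as `v`. -/
noncomputable def stdize {m n : ℕ} (v : Fin m → Fin n) (hv : Function.Injective v) :
    Equiv.Perm (Fin m) :=
  (Equiv.ofInjective v hv).trans
    (monoEquivOfFin (Set.range v)
      (by rw [Set.card_range_of_injective hv, Fintype.card_fin])).symm.toEquiv

/-- The pattern (as an abstract permutation) formed by the letters of `π` in the set `E`
of positions. -/
noncomputable def patternOf {n : ℕ} (π : Equiv.Perm (Fin n)) (E : Finset (Fin n)) : PermPat :=
  ⟨E.card, stdize (fun i => π ((E.orderIsoOfFin rfl) i))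
    (by
      intro i j hij
      exact (E.orderIsoOfFin rfl).injective (Subtype.coe_injective (π.injective hij)))⟩

/-- `E` is (the set of positions of the nonzero entries of) an embedding of `p` in `π`:
the letters of `π` in positions `E` form an occurrence of `p`. -/
def IsEmb (p : PermPat) {n : ℕ} (π : Equiv.Perm (Fin n)) (E : Finset (Fin n)) : Prop :=
  patternOf π E = p

/-- An embedding (given by its set `E` of nonzero positions) is normal if every position in
the tail of an adjacency of `π` is nonzero. -/
def IsNormal {n : ℕ} (π : Equiv.Perm (Fin n)) (E : Finset (Fin n)) : Prop :=
  ∀ j, Linked π j → j ∈ E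

/-- `NE p π`: the number of normal embeddings of `p` in `π`. -/
noncomputable def NE (p : PermPat) {n : ℕ} (π : Equiv.Perm (Fin n)) : ℕ :=
  Set.ncard {E : Finset (Fin n) | IsEmb p π E ∧ IsNormal π E}

/-- An embedding is rightmost if, within each adjacency of `π`, all of its zero entries
precede all of its nonzero entries. -/
def IsRightmost {n : ℕ} (π : Equiv.Perm (Fin n)) (E : Finset (Fin n)) : Prop :=
  ∀ i j : Fin n, blockIdx π i = blockIdx π j → i ≤ j → i ∈ E → j ∈ E

/-- Membership in `Ê^{p,π}`, the set of rightmost embeddings of `p` in `π`. -/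
def EhatMem (p : PermPat) {n : ℕ} (π : Equiv.Perm (Fin n)) (E : Finset (Fin n)) : Prop :=
  IsEmb p π E ∧ IsRightmost π E

/-- Membership in `EZ^{p,π}`: `S` is a nonempty set of rightmost embeddings of `p` in `π`
whose zero sets have empty intersection (every position is nonzero in some member). -/
def EZmem (p : PermPat) {n : ℕ} (π : Equiv.Perm (Fin n)) (S : Finset (Finset (Fin n))) : Prop :=
  S.Nonempty ∧ (∀ E ∈ S, EhatMem p π E) ∧ ∀ j : Fin n, ∃ E ∈ S, j ∈ E

/-- The sum `∑_{S ∈ EZ^{p,π}} (-1)^{|S|}`. -/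
noncomputable def EZsum (p : PermPat) {n : ℕ} (π : Equiv.Perm (Fin n)) : ℤ :=
  ∑ S ∈ Finset.univ.filter (fun S : Finset (Finset (Fin n)) => EZmem p π S), (-1 : ℤ) ^ S.card

/-! ## The adjacency decomposition and the posets `P(η)`, `A^{σ,π}` -/

/-- `π̂`, the adjacency decomposition of `π`, as a tuple of permutations. -/
noncomputable def Phat {n : ℕ} (π : Equiv.Perm (Fin n)) : Fin (numBlocks π) → PermPat :=
  fun i => patternOf π (blockF π i.val)

/-- `η̂`, the decomposition of an embedding (with nonzero positions `E`) along the
adjacencies of `π`. -/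
noncomputable def etaHat {n : ℕ} (π : Equiv.Perm (Fin n)) (E : Finset (Fin n)) :
    Fin (numBlocks π) → PermPat :=
  fun i => patternOf π (E.filter fun j => blockIdx π j = i.val)

/-- The product poset `P(η) = [η̂_1,π̂_1] × ⋯ × [η̂_t,π̂_t]`, as a subset of the product of
copies of the pattern poset indexed by the adjacencies of `π`. -/
noncomputable def Pemb {n : ℕ} (π : Equiv.Perm (Fin n)) (E : Finset (Fin n)) :
    Set (Fin (numBlocks π) → PermPat) :=
  Set.Icc (etaHat π E) (Phat π)

/-- `P(η)°`: the product poset `P(η)` with its bottom element `η̂` and top element `π̂`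
removed. -/
noncomputable def PembO {n : ℕ} (π : Equiv.Perm (Fin n)) (E : Finset (Fin n)) :
    Set (Fin (numBlocks π) → PermPat) :=
  Pemb π E \ {etaHat π E, Phat π}

/-- `A^{p,π} = ⋃_{η ∈ Ê^{p,π}} P(η)°`. -/
noncomputable def Aspace (p : PermPat) {n : ℕ} (π : Equiv.Perm (Fin n)) :
    Set (Fin (numBlocks π) → PermPat) :=
  ⋃ E ∈ {E : Finset (Fin n) | EhatMem p π E}, PembO π E

/-! ## Sundry notions -/

/-- The number of descents of a permutation. -/
noncomputable def desNum {n : ℕ} (π : Equiv.Perm (Fin n)) : ℕ :=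
  (Finset.univ.filter fun j : Fin n => ∃ h : j.val + 1 < n, π ⟨j.val + 1, h⟩ < π j).card

/-- The direct sum of two permutations. -/
def dsum {a b : ℕ} (σ : Equiv.Perm (Fin a)) (τ : Equiv.Perm (Fin b)) :
    Equiv.Perm (Fin (a + b)) :=
  finSumFinEquiv.symm.trans ((Equiv.sumCongr σ τ).trans finSumFinEquiv)

/-- A permutation is indecomposable if it is nonempty and not the direct sum of two
nonempty permutations. -/
def Indecomp (p : PermPat) : Prop :=
  0 < p.1 ∧ ¬ ∃ (a b : ℕ) (σ : Equiv.Perm (Fin a)) (τ : Equiv.Perm (Fin b)),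
    0 < a ∧ 0 < b ∧ p = ⟨a + b, dsum σ τ⟩

/-- `dpow lam m = lam ⊕ ⋯ ⊕ lam` (`m` summands). -/
def dpow {l : ℕ} (lam : Equiv.Perm (Fin l)) : (m : ℕ) → Equiv.Perm (Fin (m * l))
  | 0 => (finCongr (Nat.zero_mul l).symm).permCongr 1
  | m + 1 => (finCongr (by ring : m * l + l = (m + 1) * l)).permCongr (dsum (dpow lam m) lam)

/-- Direct sum of permutations, on `PermPat`. -/
def dsumP (p q : PermPat) : PermPat := ⟨p.1 + q.1, dsum p.2 q.2⟩

/-- The direct sum of a list of permutations. -/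
def dsumList : List PermPat → PermPat
  | [] => ⟨0, 1⟩
  | p :: L => dsumP p (dsumList L)

/-- The increasing permutation `ι_n = 12⋯n`. -/
def iota (n : ℕ) : PermPat := ⟨n, 1⟩

/-! ### Auxiliary lemmas -/

section AuxBasic

open Finset

lemma perm_eq_of_rel {m : ℕ} {p q : Equiv.Perm (Fin m)}
    (h : ∀ i j, p i < p j ↔ q i < q j) : p = q := by
  have hmono : StrictMono (fun a => q (p.symm a)) := by
    intro a b hab
    have : p (p.symm a) < p (p.symm b) := by simpa using hab
    exact (h _ _).mp this
  apply Equiv.ext; intro x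
  have := hmono.fin_apply_eq (p x)
  simpa using this.symm

lemma permPat_eq {a b : ℕ} (h : a = b) {p : Equiv.Perm (Fin a)} {q : Equiv.Perm (Fin b)}
    (hr : ∀ i j : Fin a, p i < p j ↔ q (Fin.cast h i) < q (Fin.cast h j)) :
    (⟨a, p⟩ : PermPat) = ⟨b, q⟩ := by
  subst h
  exact congrArg (Sigma.mk a) (perm_eq_of_rel hr)

lemma orderIso_symm_toEquiv_lt {α β : Type*} [Preorder α] [Preorder β] (e : α ≃o β)
    (x y : β) : e.symm.toEquiv x < e.symm.toEquiv y ↔ x < y :=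
  e.symm.lt_iff_lt

lemma stdize_lt_iff {m n : ℕ} {v : Fin m → Fin n} (hv : Function.Injective v) (i j : Fin m) :
    stdize v hv i < stdize v hv j ↔ v i < v j := by
  unfold stdize
  simp only [Equiv.trans_apply, orderIso_symm_toEquiv_lt, Equiv.ofInjective_apply,
    Subtype.mk_lt_mk]
  exact Iff.rfl

/-- The increasing enumeration of a finset of positions. -/
noncomputable def embF {n : ℕ} (E : Finset (Fin n)) : Fin E.card → Fin n :=
  fun i => ((E.orderIsoOfFin rfl) i : Fin n)

lemma embF_strictMono {n : ℕ} (E : Finset (Fin n)) : StrictMono (embF E) := by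
  intro i j hij
  exact Subtype.coe_lt_coe.mpr ((E.orderIsoOfFin rfl).lt_iff_lt.mpr hij)

lemma embF_mem {n : ℕ} (E : Finset (Fin n)) (i : Fin E.card) : embF E i ∈ E :=
  (E.orderIsoOfFin rfl i).2

lemma embF_surj {n : ℕ} (E : Finset (Fin n)) {x : Fin n} (hx : x ∈ E) :
    ∃ i, embF E i = x := by
  obtain ⟨i, hi⟩ := (E.orderIsoOfFin rfl).surjective ⟨x, hx⟩
  exact ⟨i, congrArg Subtype.val hi⟩

lemma patternOf_fst {n : ℕ} (π : Equiv.Perm (Fin n)) (E : Finset (Fin n)) :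
    (patternOf π E).1 = E.card := rfl

lemma patternOf_lt_iff {n : ℕ} (π : Equiv.Perm (Fin n)) (E : Finset (Fin n))
    (i j : Fin E.card) :
    (patternOf π E).2 i < (patternOf π E).2 j ↔ π (embF E i) < π (embF E j) :=
  stdize_lt_iff _ i j

lemma patternOf_eq_of_strictMono {n m : ℕ} (π : Equiv.Perm (Fin n)) (z : Equiv.Perm (Fin m))
    {g : Fin m → Fin n} (hg : StrictMono g) {E : Finset (Fin n)}
    (hE : ∀ x, x ∈ E ↔ ∃ i, g i = x)
    (hz : ∀ i j, z i < z j ↔ π (g i) < π (g j)) : patternOf π E = ⟨m, z⟩ := by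
  have hEimg : E = Finset.image g Finset.univ := by
    ext x; simp [hE x]
  have hc : E.card = m := by
    rw [hEimg, Finset.card_image_of_injective _ hg.injective, Finset.card_univ,
      Fintype.card_fin]
  have hgmem : ∀ i : Fin E.card, g (Fin.cast hc i) ∈ E := by
    intro i; rw [hE]; exact ⟨_, rfl⟩
  have hgsm : StrictMono (fun i : Fin E.card => g (Fin.cast hc i)) := by
    intro i j hij
    exact hg (show (Fin.cast hc i) < (Fin.cast hc j) from by
      simp only [Fin.lt_def, Fin.coe_cast]; exact hij)
  have hg' : (fun i : Fin E.card => g (Fin.cast hc i)) = E.orderEmbOfFin rfl :=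
    Finset.orderEmbOfFin_unique rfl hgmem hgsm
  have hembF : ∀ i : Fin E.card, embF E i = g (Fin.cast hc i) := by
    intro i
    rw [show embF E i = E.orderEmbOfFin rfl i from Finset.coe_orderIsoOfFin_apply E rfl i,
      ← hg']
  have : (⟨E.card, (patternOf π E).2⟩ : PermPat) = ⟨m, z⟩ := by
    apply permPat_eq hc
    intro i j
    refine (patternOf_lt_iff π E i j).trans ?_
    rw [hembF, hembF]
    exact (hz _ _).symm
  exact this

end AuxBasic

section AuxPat

open Finset

lemma patternOf_univ {n : ℕ} (π : Equiv.Perm (Fin n)) :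
    patternOf π Finset.univ = ⟨n, π⟩ :=
  patternOf_eq_of_strictMono π π (g := id) strictMono_id (by simp)
    (by intro i j; simp)

lemma patternOf_mono {n : ℕ} (π : Equiv.Perm (Fin n)) {E F : Finset (Fin n)} (hEF : E ⊆ F) :
    PatLe (patternOf π E) (patternOf π F) := by
  have hmono : StrictMono
      (fun i : Fin E.card => (F.orderIsoOfFin rfl).symm ⟨embF E i, hEF (embF_mem E i)⟩) := by
    intro i j hij
    exact (F.orderIsoOfFin rfl).symm.lt_iff_lt.mpr (Subtype.mk_lt_mk.mpr (embF_strictMono E hij))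
  refine ⟨OrderEmbedding.ofStrictMono _ hmono, ?_⟩
  intro i j
  refine (patternOf_lt_iff π E i j).trans ?_
  have hkey : ∀ s : Fin E.card,
      embF F (OrderEmbedding.ofStrictMono _ hmono s) = embF E s := by
    intro s
    show ((F.orderIsoOfFin rfl) ((F.orderIsoOfFin rfl).symm ⟨embF E s, _⟩) : Fin n) = _
    rw [OrderIso.apply_symm_apply]
  rw [← hkey i, ← hkey j]
  exact (patternOf_lt_iff π F _ _).symm

lemma exists_subset_of_patLe {n m : ℕ} (π : Equiv.Perm (Fin n)) (z : Equiv.Perm (Fin m))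
    {F : Finset (Fin n)} (h : PatLe ⟨m, z⟩ (patternOf π F)) :
    ∃ E : Finset (Fin n), E ⊆ F ∧ patternOf π E = ⟨m, z⟩ := by
  obtain ⟨f, hf⟩ := h
  refine ⟨Finset.image (fun s => embF F (f s)) Finset.univ, ?_, ?_⟩
  · intro x hx
    simp only [Finset.mem_image, Finset.mem_univ, true_and] at hx
    obtain ⟨s, rfl⟩ := hx
    exact embF_mem F _
  · refine patternOf_eq_of_strictMono π z (g := fun s => embF F (f s)) ?_ ?_ ?_
    · intro s t hst; exact embF_strictMono F (f.strictMono hst)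
    · intro x; simp
    · intro i j; exact (hf i j).trans (patternOf_lt_iff π F (f i) (f j))

lemma patLe_len_eq {m : ℕ} {z w : Equiv.Perm (Fin m)} (h : PatLe ⟨m, z⟩ ⟨m, w⟩) : z = w := by
  obtain ⟨f, hf⟩ := h
  have hfid : ∀ i, f i = i := fun i => f.strictMono.fin_apply_eq i
  apply perm_eq_of_rel
  intro i j
  simpa [hfid] using hf i j

lemma patLe_eq_of_len {p q : PermPat} (h : PatLe p q) (hlen : q.1 ≤ p.1) : p = q := by
  obtain ⟨a, σ⟩ := p; obtain ⟨b, τ⟩ := q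
  have hab : a = b := le_antisymm h.len_le hlen
  subst hab
  exact congrArg (Sigma.mk a) (patLe_len_eq h)

lemma isEmb_patLe {n : ℕ} {π : Equiv.Perm (Fin n)} {p : PermPat} {E : Finset (Fin n)}
    (h : IsEmb p π E) : PatLe p ⟨n, π⟩ := by
  rw [← h, ← patternOf_univ π]
  exact patternOf_mono π (Finset.subset_univ E)

lemma exists_emb_of_patLe {n m : ℕ} {π : Equiv.Perm (Fin n)} {z : Equiv.Perm (Fin m)}
    (h : PatLe ⟨m, z⟩ ⟨n, π⟩) : ∃ E : Finset (Fin n), IsEmb ⟨m, z⟩ π E := by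
  rw [← patternOf_univ π] at h
  obtain ⟨E, -, hE⟩ := exists_subset_of_patLe π z h
  exact ⟨E, hE⟩

end AuxPat

section AuxBlock

open Finset

variable {n : ℕ}

noncomputable def bcnt (π : Equiv.Perm (Fin n)) (j : Fin n) : ℕ :=
  (Finset.univ.filter fun m : Fin n => ¬ Linked π m ∧ m ≤ j).card

lemma not_linked_of_val_zero (π : Equiv.Perm (Fin n)) {j : Fin n} (hj : j.val = 0) :
    ¬ Linked π j := fun hL => by rw [Linked] at hL; omega

lemma bcnt_pos (π : Equiv.Perm (Fin n)) (j : Fin n) : 0 < bcnt π j := by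
  have hn : 0 < n := j.pos
  refine Finset.card_pos.mpr ⟨⟨0, hn⟩, ?_⟩
  simp only [Finset.mem_filter, Finset.mem_univ, true_and]
  exact ⟨not_linked_of_val_zero π rfl, by simp [Fin.le_def]⟩

lemma blockIdx_eq_bcnt (π : Equiv.Perm (Fin n)) (j : Fin n) :
    blockIdx π j = bcnt π j - 1 := rfl

lemma bcnt_mono (π : Equiv.Perm (Fin n)) {i j : Fin n} (hij : i ≤ j) :
    bcnt π i ≤ bcnt π j := by
  apply Finset.card_le_card
  intro m hm
  simp only [Finset.mem_filter, Finset.mem_univ, true_and] at hm ⊢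
  exact ⟨hm.1, le_trans hm.2 hij⟩

lemma blockIdx_mono (π : Equiv.Perm (Fin n)) {i j : Fin n} (hij : i ≤ j) :
    blockIdx π i ≤ blockIdx π j :=
  Nat.sub_le_sub_right (bcnt_mono π hij) 1

lemma bcnt_succ (π : Equiv.Perm (Fin n)) {i j : Fin n} (hij : j.val = i.val + 1) :
    bcnt π j = if Linked π j then bcnt π i else bcnt π i + 1 := by
  have hmem : ∀ m : Fin n, (m ≤ j) ↔ (m ≤ i ∨ m = j) := by
    intro m
    constructor
    · intro hm
      rcases Nat.lt_or_ge m.val j.val with hlt | hge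
      · exact Or.inl (by rw [Fin.le_def]; omega)
      · exact Or.inr (Fin.ext (le_antisymm hm hge))
    · rintro (hm | rfl)
      · exact le_trans hm (by rw [Fin.le_def]; omega)
      · exact le_refl _
  by_cases hL : Linked π j
  · rw [if_pos hL, bcnt, bcnt]
    congr 1
    apply Finset.filter_congr
    intro m _
    constructor
    · rintro ⟨h1, h2⟩
      rcases (hmem m).mp h2 with h3 | rfl
      · exact ⟨h1, h3⟩
      · exact absurd hL h1
    · rintro ⟨h1, h2⟩
      exact ⟨h1, (hmem m).mpr (Or.inl h2)⟩
  · rw [if_neg hL]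
    have hset : (Finset.univ.filter fun m : Fin n => ¬ Linked π m ∧ m ≤ j)
        = insert j (Finset.univ.filter fun m : Fin n => ¬ Linked π m ∧ m ≤ i) := by
      ext m
      simp only [Finset.mem_filter, Finset.mem_univ, true_and, Finset.mem_insert]
      constructor
      · rintro ⟨h1, h2⟩
        rcases (hmem m).mp h2 with h3 | rfl
        · exact Or.inr ⟨h1, h3⟩
        · exact Or.inl rfl
      · rintro (rfl | ⟨h1, h2⟩)
        · exact ⟨hL, le_refl _⟩
        · exact ⟨h1, (hmem m).mpr (Or.inl h2)⟩
    rw [bcnt, hset, Finset.card_insert_of_notMem, bcnt]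
    simp only [Finset.mem_filter, Finset.mem_univ, true_and, not_and]
    intro _
    rw [Fin.le_def]
    omega

lemma blockIdx_succ_iff (π : Equiv.Perm (Fin n)) {i j : Fin n} (hij : j.val = i.val + 1) :
    blockIdx π i = blockIdx π j ↔ Linked π j := by
  have h1 := bcnt_pos π i
  have h2 := bcnt_succ π hij
  rw [blockIdx_eq_bcnt, blockIdx_eq_bcnt]
  by_cases hL : Linked π j
  · simp only [hL, if_true] at h2
    simp [h2, hL]
  · simp only [hL, if_false] at h2
    simp only [hL, iff_false]
    omega

lemma blockIdx_squeeze (π : Equiv.Perm (Fin n)) {i j k : Fin n} (h1 : i ≤ j) (h2 : j ≤ k)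
    (h3 : blockIdx π i = blockIdx π k) : blockIdx π j = blockIdx π i :=
  le_antisymm (h3 ▸ blockIdx_mono π h2) (blockIdx_mono π h1)

lemma not_linked_iff_min (π : Equiv.Perm (Fin n)) (j : Fin n) :
    ¬ Linked π j ↔ ∀ i : Fin n, blockIdx π i = blockIdx π j → j ≤ i := by
  constructor
  · intro hL i hi
    by_contra hij
    push_neg at hij
    have hj0 : 0 < j.val := lt_of_le_of_lt (Nat.zero_le _) hij
    have hpv : (prevPos j).val = j.val - 1 := rfl
    have hple : i ≤ prevPos j := by rw [Fin.le_def, hpv]; omega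
    have hplt : prevPos j ≤ j := by rw [Fin.le_def, hpv]; omega
    have hpb : blockIdx π (prevPos j) = blockIdx π i :=
      blockIdx_squeeze π hple hplt hi
    have : Linked π j := by
      rw [← blockIdx_succ_iff π (i := prevPos j) (by rw [hpv]; omega)]
      rw [hpb, hi]
    exact hL this
  · intro hmin hL
    have hj0 : 0 < j.val := hL.1
    have hpv : (prevPos j).val = j.val - 1 := rfl
    have : blockIdx π (prevPos j) = blockIdx π j :=
      (blockIdx_succ_iff π (by rw [hpv]; omega)).mpr hL
    have := hmin _ this
    rw [Fin.le_def, hpv] at this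
    omega

/-- Block-closure of a set of positions: everything below an element within its block. -/
noncomputable def clo (π : Equiv.Perm (Fin n)) (T : Finset (Fin n)) : Finset (Fin n) :=
  Finset.univ.filter fun i => ∃ j ∈ T, blockIdx π i = blockIdx π j ∧ i ≤ j

lemma mem_clo (π : Equiv.Perm (Fin n)) (T : Finset (Fin n)) (i : Fin n) :
    i ∈ clo π T ↔ ∃ j ∈ T, blockIdx π i = blockIdx π j ∧ i ≤ j := by
  simp [clo]

lemma subset_clo (π : Equiv.Perm (Fin n)) (T : Finset (Fin n)) : T ⊆ clo π T := by
  intro i hi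
  rw [mem_clo]
  exact ⟨i, hi, rfl, le_refl _⟩

lemma clo_downward (π : Equiv.Perm (Fin n)) (T : Finset (Fin n)) {i i' : Fin n}
    (hi : i ∈ clo π T) (hb : blockIdx π i' = blockIdx π i) (hle : i' ≤ i) :
    i' ∈ clo π T := by
  rw [mem_clo] at hi ⊢
  obtain ⟨j, hj, h1, h2⟩ := hi
  exact ⟨j, hj, hb.trans h1, le_trans hle h2⟩

end AuxBlock

section AuxPush

open Finset

variable {n : ℕ}

lemma linked_val (π : Equiv.Perm (Fin n)) {i j : Fin n} (hij : j.val = i.val + 1)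
    (hL : Linked π j) : (π j).val + 1 = (π i).val ∨ (π i).val + 1 = (π j).val := by
  have hprev : prevPos j = i := by
    apply Fin.ext
    show j.val - 1 = i.val
    omega
  have := hL.2
  rw [hprev] at this
  exact this

lemma swap_pattern (π : Equiv.Perm (Fin n)) {E : Finset (Fin n)} {i j : Fin n}
    (hij : j.val = i.val + 1) (hiE : i ∈ E) (hjE : j ∉ E) (hL : Linked π j) :
    patternOf π (insert j (E.erase i)) = patternOf π E := by
  classical
  set f : Fin E.card → Fin n := fun s => if embF E s = i then j else embF E s with hf
  have hinej : i ≠ j := fun h => by rw [h] at hij; omega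
  have huinj : Function.Injective (embF E) := (embF_strictMono E).injective
  have hne_j : ∀ s, embF E s ≠ j := fun s h => hjE (h ▸ embF_mem E s)
  have hfmono : StrictMono f := by
    intro s t hst
    have hu : embF E s < embF E t := embF_strictMono E hst
    simp only [hf]
    by_cases hsi : embF E s = i
    · rw [if_pos hsi]
      have hti : embF E t ≠ i := fun h => absurd (h ▸ hu) (by rw [hsi]; exact lt_irrefl i)
      rw [if_neg hti]
      have h1 : i < embF E t := hsi ▸ hu
      have h2 : embF E t ≠ j := hne_j t
      rw [Fin.lt_def] at h1 ⊢
      have h3 : (embF E t).val ≠ j.val := fun h => h2 (Fin.ext h)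
      omega
    · rw [if_neg hsi]
      by_cases hti : embF E t = i
      · rw [if_pos hti]
        have h1 : embF E s < i := hti ▸ hu
        rw [Fin.lt_def] at h1 ⊢
        omega
      · rw [if_neg hti]; exact hu
  have hfmem : ∀ x, x ∈ insert j (E.erase i) ↔ ∃ s, f s = x := by
    intro x
    simp only [Finset.mem_insert, Finset.mem_erase]
    constructor
    · rintro (rfl | ⟨hxi, hxE⟩)
      · obtain ⟨s, hs⟩ := embF_surj E hiE
        exact ⟨s, by simp [hf, hs]⟩
      · obtain ⟨s, hs⟩ := embF_surj E hxE
        exact ⟨s, by simp [hf, hs, hxi]⟩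
    · rintro ⟨s, rfl⟩
      simp only [hf]
      by_cases hsi : embF E s = i
      · rw [if_pos hsi]; exact Or.inl rfl
      · rw [if_neg hsi]; exact Or.inr ⟨hsi, embF_mem E s⟩
  have hvals : ∀ s t : Fin E.card, π (embF E s) < π (embF E t) ↔ π (f s) < π (f t) := by
    intro s t
    have hLv := linked_val π hij hL
    have hπne : ∀ x y : Fin n, x ≠ y → (π x).val ≠ (π y).val := by
      intro x y hxy h
      exact hxy (π.injective (Fin.ext h))
    by_cases hst : s = t
    · subst hst; simp
    · have hust : embF E s ≠ embF E t := fun h => hst (huinj h)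
      simp only [hf]
      by_cases hsi : embF E s = i
      · have hti : embF E t ≠ i := fun h => hust (hsi.trans h.symm)
        rw [if_pos hsi, if_neg hti, hsi]
        have h1 := hπne _ _ hti
        have h2 := hπne _ _ (hne_j t)
        rw [Fin.lt_def, Fin.lt_def]
        omega
      · by_cases hti : embF E t = i
        · rw [if_neg hsi, if_pos hti, hti]
          have h1 := hπne _ _ hsi
          have h2 := hπne _ _ (hne_j s)
          rw [Fin.lt_def, Fin.lt_def]
          omega
        · rw [if_neg hsi, if_neg hti]
  exact patternOf_eq_of_strictMono π (patternOf π E).2 hfmono hfmem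
    (fun s t => (patternOf_lt_iff π E s t).trans (hvals s t))

lemma swap_counts (π : Equiv.Perm (Fin n)) {E : Finset (Fin n)} {i j : Fin n}
    (hij : j.val = i.val + 1) (hiE : i ∈ E) (hjE : j ∉ E) (hL : Linked π j) (b : ℕ) :
    ((insert j (E.erase i)).filter fun x => blockIdx π x = b).card
      = (E.filter fun x => blockIdx π x = b).card := by
  classical
  have hbij : blockIdx π i = blockIdx π j := (blockIdx_succ_iff π hij).mpr hL
  have hinej : i ≠ j := fun h => by rw [h] at hij; omega
  rw [Finset.filter_insert, Finset.filter_erase]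
  by_cases hb : blockIdx π j = b
  · rw [if_pos hb]
    have hiF : i ∈ E.filter fun x => blockIdx π x = b :=
      Finset.mem_filter.mpr ⟨hiE, hbij.trans hb⟩
    have hjF : j ∉ (E.filter fun x => blockIdx π x = b).erase i := by
      simp only [Finset.mem_erase, Finset.mem_filter]
      tauto
    rw [Finset.card_insert_of_notMem hjF, Finset.card_erase_of_mem hiF]
    have : 0 < (E.filter fun x => blockIdx π x = b).card := Finset.card_pos.mpr ⟨i, hiF⟩
    omega
  · rw [if_neg hb]
    have hiF : i ∉ E.filter fun x => blockIdx π x = b := by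
      simp only [Finset.mem_filter]
      rintro ⟨-, h2⟩
      exact hb (hbij ▸ h2)
    rw [Finset.erase_eq_of_notMem hiF]

lemma exists_adjacent_violation_aux (π : Equiv.Perm (Fin n)) (E : Finset (Fin n)) :
    ∀ (d : ℕ) (i j : Fin n), j.val = i.val + d + 1 → blockIdx π i = blockIdx π j →
      i ∈ E → j ∉ E →
      ∃ i' j' : Fin n, j'.val = i'.val + 1 ∧ i' ∈ E ∧ j' ∉ E ∧ Linked π j' := by
  intro d
  induction d with
  | zero =>
    intro i j hij hb hiE hjE
    exact ⟨i, j, hij, hiE, hjE, (blockIdx_succ_iff π hij).mp hb⟩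
  | succ d ih =>
    intro i j hij hb hiE hjE
    have hi'lt : i.val + 1 < n := by have := j.isLt; omega
    set i' : Fin n := ⟨i.val + 1, hi'lt⟩ with hi'
    have hle1 : i ≤ i' := by rw [Fin.le_def]; simp [hi']
    have hle2 : i' ≤ j := by rw [Fin.le_def]; simp [hi']; omega
    have hbi' : blockIdx π i' = blockIdx π i := blockIdx_squeeze π hle1 hle2 hb
    by_cases hi'E : i' ∈ E
    · exact ih i' j (by simp [hi']; omega) (hbi'.trans hb) hi'E hjE
    · exact ⟨i, i', rfl, hiE, hi'E, (blockIdx_succ_iff π (i := i) rfl).mp hbi'.symm⟩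

lemma exists_adjacent_violation (π : Equiv.Perm (Fin n)) {E : Finset (Fin n)}
    (h : ¬ IsRightmost π E) :
    ∃ i j : Fin n, j.val = i.val + 1 ∧ i ∈ E ∧ j ∉ E ∧ Linked π j := by
  rw [IsRightmost] at h
  push_neg at h
  obtain ⟨i, j, hb, hle, hiE, hjE⟩ := h
  have : i.val < j.val := by
    rcases lt_or_eq_of_le hle with h1 | h1
    · exact h1
    · exact absurd (h1 ▸ hiE) hjE
  exact exists_adjacent_violation_aux π E (j.val - i.val - 1) i j (by omega) hb hiE hjE

lemma push_aux (π : Equiv.Perm (Fin n)) :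
    ∀ (N : ℕ) (E : Finset (Fin n)), (∑ x ∈ E, (n - x.val)) ≤ N →
      ∃ E' : Finset (Fin n), IsRightmost π E' ∧ patternOf π E' = patternOf π E ∧
        ∀ b : ℕ, ((E'.filter fun x => blockIdx π x = b).card
          = (E.filter fun x => blockIdx π x = b).card) := by
  intro N
  induction N with
  | zero =>
    intro E hE
    by_cases hR : IsRightmost π E
    · exact ⟨E, hR, rfl, fun b => rfl⟩
    · obtain ⟨i, j, hij, hiE, hjE, hL⟩ := exists_adjacent_violation π hR
      exfalso
      have : n - i.val ≤ ∑ x ∈ E, (n - x.val) := Finset.single_le_sum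
        (f := fun x : Fin n => n - x.val) (fun x _ => Nat.zero_le _) hiE
      have := j.isLt
      omega
  | succ N ih =>
    intro E hE
    by_cases hR : IsRightmost π E
    · exact ⟨E, hR, rfl, fun b => rfl⟩
    · obtain ⟨i, j, hij, hiE, hjE, hL⟩ := exists_adjacent_violation π hR
      have hjE' : j ∉ E.erase i := fun h => hjE (Finset.mem_of_mem_erase h)
      have hsum : (∑ x ∈ insert j (E.erase i), (n - x.val)) ≤ N := by
        rw [Finset.sum_insert hjE']
        have herase : (∑ x ∈ E.erase i, (n - x.val)) + (n - i.val)
            = ∑ x ∈ E, (n - x.val) := Finset.sum_erase_add E _ hiE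
        have := j.isLt
        omega
      obtain ⟨E', h1, h2, h3⟩ := ih (insert j (E.erase i)) hsum
      refine ⟨E', h1, h2.trans (swap_pattern π hij hiE hjE hL), fun b => ?_⟩
      rw [h3 b, swap_counts π hij hiE hjE hL b]

lemma push (π : Equiv.Perm (Fin n)) (E : Finset (Fin n)) :
    ∃ E' : Finset (Fin n), IsRightmost π E' ∧ patternOf π E' = patternOf π E ∧
      ∀ b : ℕ, ((E'.filter fun x => blockIdx π x = b).card
        = (E.filter fun x => blockIdx π x = b).card) :=
  push_aux π _ E (le_refl _)

end AuxPush

section AuxAvoid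

open Finset

variable {n : ℕ}

lemma ehat_nonempty {m : ℕ} {π : Equiv.Perm (Fin n)} {z : Equiv.Perm (Fin m)}
    (h : PatLe ⟨m, z⟩ ⟨n, π⟩) : ∃ E, EhatMem ⟨m, z⟩ π E := by
  obtain ⟨E, hE⟩ := exists_emb_of_patLe h
  obtain ⟨E', h1, h2, -⟩ := push π E
  exact ⟨E', by rw [IsEmb] at hE ⊢; rw [h2, hE], h1⟩

lemma ehat_avoid_iff {m : ℕ} (π : Equiv.Perm (Fin n)) (z : Equiv.Perm (Fin m))
    (T : Finset (Fin n)) :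
    (∃ E, EhatMem ⟨m, z⟩ π E ∧ ∀ x ∈ T, x ∉ E) ↔
      PatLe ⟨m, z⟩ (patternOf π (Finset.univ \ clo π T)) := by
  constructor
  · rintro ⟨E, ⟨hemb, hright⟩, havoid⟩
    have hsub : E ⊆ Finset.univ \ clo π T := by
      intro x hx
      rw [Finset.mem_sdiff]
      refine ⟨Finset.mem_univ x, fun hxc => ?_⟩
      rw [mem_clo] at hxc
      obtain ⟨t, ht, hb, hle⟩ := hxc
      exact havoid t ht (hright x t hb hle hx)
    rw [IsEmb] at hemb
    rw [← hemb]
    exact patternOf_mono π hsub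
  · intro hle
    obtain ⟨E, hsub, hpat⟩ := exists_subset_of_patLe π z hle
    obtain ⟨E', hright, hpat', hcount⟩ := push π E
    refine ⟨E', ⟨by rw [IsEmb, hpat', hpat], hright⟩, ?_⟩
    intro t ht htE'
    -- t ∈ T, t ∈ E' : derive a contradiction by counting in the block of t
    set b := blockIdx π t with hb
    set A : Finset (Fin n) :=
      Finset.univ.filter (fun x => blockIdx π x = b ∧ t ≤ x) with hA
    have htC : t ∈ clo π T := subset_clo π T ht
    -- A ⊆ E'.filter (blockIdx = b)
    have hAE : A ⊆ E'.filter (fun x => blockIdx π x = b) := by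
      intro x hx
      rw [hA, Finset.mem_filter] at hx
      obtain ⟨-, hxb, htx⟩ := hx
      exact Finset.mem_filter.mpr ⟨hright t x (hb ▸ hxb.symm) htx htE', hxb⟩
    -- E.filter (blockIdx = b) ⊆ (block b) \ clo π T ⊆ A.erase t
    have hEsub : E.filter (fun x => blockIdx π x = b) ⊆ A.erase t := by
      intro x hx
      rw [Finset.mem_filter] at hx
      obtain ⟨hxE, hxb⟩ := hx
      have hxC : x ∉ clo π T := (Finset.mem_sdiff.mp (hsub hxE)).2
      have htlex : t ≤ x := by
        by_contra hlt
        push_neg at hlt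
        exact hxC (clo_downward π T htC (by rw [hxb, hb]) (le_of_lt hlt))
      have hxt : x ≠ t := by
        rintro rfl
        exact hxC htC
      exact Finset.mem_erase.mpr ⟨hxt, Finset.mem_filter.mpr ⟨Finset.mem_univ x, hxb, htlex⟩⟩
    have htA : t ∈ A := Finset.mem_filter.mpr ⟨Finset.mem_univ t, rfl, le_refl t⟩
    have h1 : A.card ≤ (E'.filter (fun x => blockIdx π x = b)).card := Finset.card_le_card hAE
    have h2 : (E.filter (fun x => blockIdx π x = b)).card ≤ A.card - 1 := by
      have := Finset.card_le_card hEsub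
      rwa [Finset.card_erase_of_mem htA] at this
    have h3 := hcount b
    have h4 : 0 < A.card := Finset.card_pos.mpr ⟨t, htA⟩
    omega

end AuxAvoid

section AuxMu

open Finset

lemma permMu_self (p : PermPat) : permMu p p = 1 := by rw [permMu]; simp

lemma permMu_rec {p q : PermPat} (h1 : p ≠ q) (h2 : PatLe p q) :
    permMu p q = - ∑ m ∈ Finset.range q.1, ∑ z : Equiv.Perm (Fin m),
        (if PatLe p ⟨m, z⟩ ∧ PatLe ⟨m, z⟩ q then permMu p ⟨m, z⟩ else 0) := by
  rw [permMu, if_neg h1, if_pos h2]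
  congr 1
  exact (Finset.sum_range fun m => ∑ z : Equiv.Perm (Fin m),
    if PatLe p ⟨m, z⟩ ∧ PatLe ⟨m, z⟩ q then permMu p ⟨m, z⟩ else 0).symm

lemma permMu_rec' {k n : ℕ} (σ : Equiv.Perm (Fin k)) (π : Equiv.Perm (Fin n))
    (h2 : PatLe ⟨k, σ⟩ ⟨n, π⟩) (h1 : (⟨k, σ⟩ : PermPat) ≠ ⟨n, π⟩) :
    permMu ⟨k, σ⟩ ⟨n, π⟩ = - ∑ m ∈ Finset.range (n + 1), ∑ z : Equiv.Perm (Fin m),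
        (if PatLe ⟨k, σ⟩ ⟨m, z⟩ ∧ PatLe ⟨m, z⟩ ⟨n, π⟩ ∧ (⟨m, z⟩ : PermPat) ≠ ⟨n, π⟩
         then permMu ⟨k, σ⟩ ⟨m, z⟩ else 0) := by
  rw [permMu_rec h1 h2]
  congr 1
  rw [Finset.sum_range_succ]
  have hlast : (∑ z : Equiv.Perm (Fin n),
      (if PatLe ⟨k, σ⟩ ⟨n, z⟩ ∧ PatLe ⟨n, z⟩ ⟨n, π⟩ ∧ ((⟨n, z⟩ : PermPat) ≠ ⟨n, π⟩)
       then permMu ⟨k, σ⟩ ⟨n, z⟩ else 0)) = 0 := by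
    apply Finset.sum_eq_zero
    intro z _
    rw [if_neg]
    rintro ⟨-, hzπ, hne⟩
    exact hne (patLe_eq_of_len hzπ (le_refl _))
  rw [hlast, add_zero]
  apply Finset.sum_congr rfl
  intro m hm
  apply Finset.sum_congr rfl
  intro z _
  have hmn : m ≠ n := Nat.ne_of_lt (Finset.mem_range.mp hm)
  have hzne : ((⟨m, z⟩ : PermPat) ≠ ⟨n, π⟩) := fun he => hmn (congrArg Sigma.fst he)
  by_cases hc : PatLe ⟨k, σ⟩ ⟨m, z⟩ ∧ PatLe ⟨m, z⟩ ⟨n, π⟩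
  · rw [if_pos hc, if_pos ⟨hc.1, hc.2, hzne⟩]
  · rw [if_neg hc, if_neg (fun hc2 => hc ⟨hc2.1, hc2.2.1⟩)]

lemma mu_interval_sum {k n : ℕ} (σ : Equiv.Perm (Fin k)) (ρ : PermPat) (hρ : ρ.1 ≤ n) :
    (∑ m ∈ Finset.range (n + 1), ∑ z : Equiv.Perm (Fin m),
      (if PatLe ⟨k, σ⟩ ⟨m, z⟩ ∧ PatLe ⟨m, z⟩ ρ then permMu ⟨k, σ⟩ ⟨m, z⟩ else 0))
      = if (⟨k, σ⟩ : PermPat) = ρ then 1 else 0 := by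
  obtain ⟨r, w⟩ := ρ
  have hr : r ≤ n := hρ
  have hstep1 : (∑ m ∈ Finset.range (n + 1), ∑ z : Equiv.Perm (Fin m),
      (if PatLe ⟨k, σ⟩ ⟨m, z⟩ ∧ PatLe ⟨m, z⟩ ⟨r, w⟩ then permMu ⟨k, σ⟩ ⟨m, z⟩ else 0))
      = ∑ m ∈ Finset.range (r + 1), ∑ z : Equiv.Perm (Fin m),
      (if PatLe ⟨k, σ⟩ ⟨m, z⟩ ∧ PatLe ⟨m, z⟩ ⟨r, w⟩ then permMu ⟨k, σ⟩ ⟨m, z⟩ else 0) := by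
    symm
    apply Finset.sum_subset
    · intro x hx
      rw [Finset.mem_range] at hx ⊢
      omega
    · intro x _ hx
      rw [Finset.mem_range] at hx
      apply Finset.sum_eq_zero
      intro z _
      rw [if_neg]
      rintro ⟨-, hle⟩
      have := hle.len_le
      simp only at this
      omega
  rw [hstep1, Finset.sum_range_succ]
  have hlast : (∑ z : Equiv.Perm (Fin r),
      (if PatLe ⟨k, σ⟩ ⟨r, z⟩ ∧ PatLe ⟨r, z⟩ ⟨r, w⟩ then permMu ⟨k, σ⟩ ⟨r, z⟩ else 0))
      = if PatLe ⟨k, σ⟩ ⟨r, w⟩ then permMu ⟨k, σ⟩ ⟨r, w⟩ else 0 := by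
    rw [Finset.sum_eq_single w]
    · by_cases hc : PatLe ⟨k, σ⟩ ⟨r, w⟩
      · rw [if_pos ⟨hc, patLe_refl ⟨r, w⟩⟩, if_pos hc]
      · rw [if_neg (fun h => hc h.1), if_neg hc]
    · intro z _ hzw
      rw [if_neg]
      rintro ⟨-, hle⟩
      exact hzw (patLe_len_eq hle)
    · intro h
      exact absurd (Finset.mem_univ w) h
  rw [hlast]
  by_cases heq : (⟨k, σ⟩ : PermPat) = ⟨r, w⟩
  · rw [if_pos heq]
    have hkr : k = r := congrArg Sigma.fst heq
    have hfirst : (∑ m ∈ Finset.range r, ∑ z : Equiv.Perm (Fin m),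
        (if PatLe ⟨k, σ⟩ ⟨m, z⟩ ∧ PatLe ⟨m, z⟩ ⟨r, w⟩ then permMu ⟨k, σ⟩ ⟨m, z⟩ else 0)) = 0 := by
      apply Finset.sum_eq_zero
      intro m hm
      apply Finset.sum_eq_zero
      intro z _
      rw [if_neg]
      rintro ⟨hle, -⟩
      have := hle.len_le
      simp only at this
      rw [Finset.mem_range] at hm
      omega
    rw [hfirst, if_pos (heq ▸ patLe_refl ⟨k, σ⟩), heq, permMu_self, zero_add]
  · rw [if_neg heq]
    by_cases hle : PatLe ⟨k, σ⟩ ⟨r, w⟩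
    · rw [if_pos hle, permMu_rec heq hle]
      simp only
      ring
    · rw [if_neg hle]
      rw [Finset.sum_eq_zero, zero_add]
      intro m _
      apply Finset.sum_eq_zero
      intro z _
      rw [if_neg]
      rintro ⟨h1, h2⟩
      exact hle (patLe_trans h1 h2)

end AuxMu

section AuxIncExc

open Finset

lemma sum_powerset_erase_empty {X : Type*} [DecidableEq X] (A : Finset X) :
    ∑ S ∈ A.powerset.erase ∅, (-1 : ℤ) ^ S.card = (if A = ∅ then 1 else 0) - 1 := by
  have h0 : (∅ : Finset X) ∈ A.powerset := Finset.mem_powerset.mpr (Finset.empty_subset A)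
  have hsplit := Finset.add_sum_erase A.powerset (fun S : Finset X => (-1 : ℤ) ^ S.card) h0
  rw [Finset.sum_powerset_neg_one_pow_card] at hsplit
  simp only [Finset.card_empty, pow_zero] at hsplit
  omega

lemma sum_subsets_sign {X : Type*} [DecidableEq X] {A : Finset X} (B : Finset X)
    (hBA : B ⊆ A) :
    (∑ S ∈ A.powerset.erase ∅, (if S ⊆ B then (-1 : ℤ) ^ S.card else 0))
      = (if B = ∅ then 1 else 0) - 1 := by
  rw [← Finset.sum_filter, ← sum_powerset_erase_empty B]
  congr 1
  ext S
  simp only [Finset.mem_filter, Finset.mem_erase, Finset.mem_powerset]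
  constructor
  · rintro ⟨⟨h1, -⟩, h3⟩
    exact ⟨h1, h3⟩
  · rintro ⟨h1, h2⟩
    exact ⟨⟨h1, h2.trans hBA⟩, h2⟩

end AuxIncExc

section AuxEZ

open Finset

lemma one_add_EZsum {n m : ℕ} (π : Equiv.Perm (Fin n)) (z : Equiv.Perm (Fin m)) (hn : 0 < n)
    (hne : ∃ E, EhatMem ⟨m, z⟩ π E) :
    1 + EZsum ⟨m, z⟩ π
      = - ∑ T ∈ (Finset.univ : Finset (Fin n)).powerset.erase ∅,
          (-1 : ℤ) ^ T.card *
            (if ∃ E, EhatMem ⟨m, z⟩ π E ∧ ∀ x ∈ T, x ∉ E then 1 else 0) := by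
  classical
  set EE : Finset (Finset (Fin n)) := Finset.univ.filter (fun E => EhatMem ⟨m, z⟩ π E) with hEE
  have hEEne : EE ≠ ∅ := by
    obtain ⟨E, hE⟩ := hne
    exact Finset.ne_empty_of_mem (Finset.mem_filter.mpr ⟨Finset.mem_univ E, hE⟩)
  set cov : Finset (Finset (Fin n)) → Prop := fun S => ∀ j : Fin n, ∃ E ∈ S, j ∈ E with hcovd
  set miss : Finset (Finset (Fin n)) → Finset (Fin n) :=
    fun S => Finset.univ.filter (fun j => ∀ E ∈ S, j ∉ E) with hmissd
  have hmiss_empty : ∀ S, miss S = ∅ ↔ cov S := by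
    intro S
    rw [hmissd, hcovd]
    simp only [Finset.eq_empty_iff_forall_notMem, Finset.mem_filter, Finset.mem_univ, true_and]
    push_neg
    rfl
  -- Step 1: EZsum as a sum over nonempty subsets of EE
  have h1 : EZsum ⟨m, z⟩ π
      = ∑ S ∈ EE.powerset.erase ∅, (if cov S then (-1 : ℤ) ^ S.card else 0) := by
    rw [EZsum, ← Finset.sum_filter]
    refine Finset.sum_congr ?_ (fun _ _ => rfl)
    refine Finset.ext fun S => ?_
    rw [Finset.mem_filter, Finset.mem_filter]
    simp only [Finset.mem_filter, Finset.mem_univ, true_and, Finset.mem_erase,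
      Finset.mem_powerset, EZmem]
    constructor
    · rintro ⟨hne', hmem, hcv⟩
      exact ⟨⟨Finset.nonempty_iff_ne_empty.mp hne',
        fun E hE => Finset.mem_filter.mpr ⟨Finset.mem_univ E, hmem E hE⟩⟩, hcv⟩
    · rintro ⟨⟨hne', hsub⟩, hcv⟩
      exact ⟨Finset.nonempty_iff_ne_empty.mpr hne',
        fun E hE => (Finset.mem_filter.mp (hsub hE)).2, hcv⟩
  -- Step 2: complement the indicator
  have h2 : EZsum ⟨m, z⟩ π
      = (∑ S ∈ EE.powerset.erase ∅, (-1 : ℤ) ^ S.card)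
        - ∑ S ∈ EE.powerset.erase ∅, (if ¬ cov S then (-1 : ℤ) ^ S.card else 0) := by
    rw [h1, ← Finset.sum_sub_distrib]
    apply Finset.sum_congr rfl
    intro S _
    by_cases hc : cov S
    · rw [if_pos hc, if_neg (not_not_intro hc)]; ring
    · rw [if_neg hc, if_pos hc]; ring
  rw [sum_powerset_erase_empty EE, if_neg hEEne] at h2
  -- Step 3: inclusion-exclusion on positions for the inner indicator
  have h3 : (∑ S ∈ EE.powerset.erase ∅, (if ¬ cov S then (-1 : ℤ) ^ S.card else 0))
      = ∑ S ∈ EE.powerset.erase ∅, ∑ T ∈ (Finset.univ : Finset (Fin n)).powerset.erase ∅,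
          -((if T ⊆ miss S then (-1 : ℤ) ^ T.card else 0) * (-1 : ℤ) ^ S.card) := by
    apply Finset.sum_congr rfl
    intro S _
    rw [Finset.sum_neg_distrib, ← Finset.sum_mul, sum_subsets_sign (miss S)
      (Finset.subset_univ _)]
    by_cases hc : cov S
    · rw [if_neg (not_not_intro hc), if_pos ((hmiss_empty S).mpr hc)]
      try ring
    · rw [if_pos hc, if_neg (fun h => hc ((hmiss_empty S).mp h))]
      try ring
  rw [h3, Finset.sum_comm] at h2
  -- Step 4: evaluate the inner sum over S, for each fixed T
  have h4 : ∀ T ∈ (Finset.univ : Finset (Fin n)).powerset.erase ∅,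
      (∑ S ∈ EE.powerset.erase ∅,
        -((if T ⊆ miss S then (-1 : ℤ) ^ T.card else 0) * (-1 : ℤ) ^ S.card))
      = (-1 : ℤ) ^ T.card *
          (if ∃ E, EhatMem ⟨m, z⟩ π E ∧ ∀ x ∈ T, x ∉ E then 1 else 0) := by
    intro T _
    set EET : Finset (Finset (Fin n)) := EE.filter (fun E => ∀ x ∈ T, x ∉ E) with hEET
    have hTmiss : ∀ S ∈ EE.powerset.erase ∅, (T ⊆ miss S ↔ S ⊆ EET) := by
      intro S hS
      rw [Finset.mem_erase, Finset.mem_powerset] at hS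
      constructor
      · intro hT E hES
        refine Finset.mem_filter.mpr ⟨hS.2 hES, fun x hxT => ?_⟩
        have := hT hxT
        rw [hmissd, Finset.mem_filter] at this
        exact this.2 E hES
      · intro hSE x hxT
        rw [hmissd, Finset.mem_filter]
        exact ⟨Finset.mem_univ x, fun E hES => (Finset.mem_filter.mp (hSE hES)).2 x hxT⟩
    have hinner : (∑ S ∈ EE.powerset.erase ∅,
        (if T ⊆ miss S then (-1 : ℤ) ^ S.card else 0))
        = (if EET = ∅ then 1 else 0) - 1 := by
      rw [← sum_subsets_sign EET (Finset.filter_subset _ _)]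
      apply Finset.sum_congr rfl
      intro S hS
      exact if_congr (hTmiss S hS) rfl rfl
    have hEx : (EET = ∅) ↔ ¬ (∃ E, EhatMem ⟨m, z⟩ π E ∧ ∀ x ∈ T, x ∉ E) := by
      rw [hEET, hEE]
      simp only [Finset.eq_empty_iff_forall_notMem, Finset.mem_filter, Finset.mem_univ,
        true_and, not_exists, not_and]
    have hfact : (∑ S ∈ EE.powerset.erase ∅,
        -((if T ⊆ miss S then (-1 : ℤ) ^ T.card else 0) * (-1 : ℤ) ^ S.card))
        = -((-1 : ℤ) ^ T.card * ∑ S ∈ EE.powerset.erase ∅,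
            (if T ⊆ miss S then (-1 : ℤ) ^ S.card else 0)) := by
      rw [Finset.mul_sum, ← Finset.sum_neg_distrib]
      apply Finset.sum_congr rfl
      intro S _
      by_cases hc : T ⊆ miss S
      · rw [if_pos hc, if_pos hc]; try ring
      · rw [if_neg hc, if_neg hc]; try ring
    rw [hfact, hinner]
    by_cases hc : ∃ E, EhatMem ⟨m, z⟩ π E ∧ ∀ x ∈ T, x ∉ E
    · rw [if_pos hc, if_neg (fun h => (hEx.mp h) hc)]
      try ring
    · rw [if_neg hc, if_pos (hEx.mpr hc)]
      try ring
  rw [Finset.sum_congr rfl h4] at h2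
  rw [h2]
  ring

end AuxEZ

section AuxCount

open Finset

variable {n : ℕ}

/-- The per-block maxima of a set of positions. -/
noncomputable def blockMax (π : Equiv.Perm (Fin n)) (C : Finset (Fin n)) : Finset (Fin n) :=
  C.filter (fun j => ∀ i ∈ C, blockIdx π i = blockIdx π j → i ≤ j)

lemma clo_idem (π : Equiv.Perm (Fin n)) (T : Finset (Fin n)) : clo π (clo π T) = clo π T := by
  apply Finset.Subset.antisymm
  · intro i hi
    rw [mem_clo] at hi
    obtain ⟨j, hj, hb, hle⟩ := hi
    rw [mem_clo] at hj
    obtain ⟨t, ht, hb2, hle2⟩ := hj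
    rw [mem_clo]
    exact ⟨t, ht, hb.trans hb2, hle.trans hle2⟩
  · exact subset_clo π _

lemma clo_mono (π : Equiv.Perm (Fin n)) {T C : Finset (Fin n)} (h : T ⊆ C) :
    clo π T ⊆ clo π C := by
  intro i hi
  rw [mem_clo] at hi ⊢
  obtain ⟨j, hj, hb, hle⟩ := hi
  exact ⟨j, h hj, hb, hle⟩

lemma exists_blockMax (π : Equiv.Perm (Fin n)) (C : Finset (Fin n)) {c : Fin n} (hc : c ∈ C) :
    ∃ m ∈ blockMax π C, blockIdx π c = blockIdx π m ∧ c ≤ m := by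
  set B : Finset (Fin n) := C.filter (fun i => blockIdx π i = blockIdx π c) with hB
  have hBne : B.Nonempty := ⟨c, Finset.mem_filter.mpr ⟨hc, rfl⟩⟩
  set mx := B.max' hBne with hmx
  have hmxB : mx ∈ B := B.max'_mem hBne
  rw [hB, Finset.mem_filter] at hmxB
  refine ⟨mx, ?_, hmxB.2.symm, ?_⟩
  · rw [blockMax, Finset.mem_filter]
    refine ⟨hmxB.1, fun i hiC hib => ?_⟩
    apply Finset.le_max'
    rw [hB, Finset.mem_filter]
    exact ⟨hiC, hib.trans hmxB.2⟩
  · exact Finset.le_max' B c (Finset.mem_filter.mpr ⟨hc, rfl⟩)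

lemma blockMax_nonempty (π : Equiv.Perm (Fin n)) {C : Finset (Fin n)} (hC : C.Nonempty) :
    (blockMax π C).Nonempty := by
  obtain ⟨c, hc⟩ := hC
  obtain ⟨m, hm, -, -⟩ := exists_blockMax π C hc
  exact ⟨m, hm⟩

lemma clo_fiber_char (π : Equiv.Perm (Fin n)) {C : Finset (Fin n)} (hC : clo π C = C)
    (T : Finset (Fin n)) : clo π T = C ↔ blockMax π C ⊆ T ∧ T ⊆ C := by
  constructor
  · intro h
    constructor
    · intro m hm
      rw [blockMax, Finset.mem_filter] at hm
      obtain ⟨hmC, hmax⟩ := hm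
      rw [← h, mem_clo] at hmC
      obtain ⟨t, ht, hb, hle⟩ := hmC
      have htC : t ∈ C := h ▸ subset_clo π T ht
      have := hmax t htC hb.symm
      have : t = m := le_antisymm this hle
      exact this ▸ ht
    · exact h ▸ subset_clo π T
  · rintro ⟨hM, hTC⟩
    apply Finset.Subset.antisymm
    · exact hC ▸ clo_mono π hTC
    · intro c hcC
      obtain ⟨m, hm, hb, hle⟩ := exists_blockMax π C hcC
      rw [mem_clo]
      exact ⟨m, hM hm, hb, hle⟩

lemma heads_of_closed_max (π : Equiv.Perm (Fin n)) {C : Finset (Fin n)}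
    (hclo : clo π C = C) (hmax : blockMax π C = C) : ∀ j ∈ C, ¬ Linked π j := by
  intro j hjC
  rw [not_linked_iff_min]
  intro i hib
  by_contra hij
  push_neg at hij
  have hiC : i ∈ C := by
    rw [← hclo, mem_clo]
    exact ⟨j, hjC, hib, le_of_lt hij⟩
  rw [← hmax, blockMax, Finset.mem_filter] at hiC
  have := hiC.2 j hjC hib.symm
  exact absurd (lt_of_le_of_lt this hij) (lt_irrefl j)

lemma closed_max_of_heads (π : Equiv.Perm (Fin n)) {C : Finset (Fin n)}
    (hsub : ∀ j ∈ C, ¬ Linked π j) : clo π C = C ∧ blockMax π C = C := by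
  constructor
  · apply Finset.Subset.antisymm
    · intro i hi
      rw [mem_clo] at hi
      obtain ⟨c, hcC, hb, hle⟩ := hi
      have hmin := (not_linked_iff_min π c).mp (hsub c hcC) i hb
      have : i = c := le_antisymm hle hmin
      exact this ▸ hcC
    · exact subset_clo π C
  · apply Finset.Subset.antisymm
    · exact Finset.filter_subset _ _
    · intro c hcC
      rw [blockMax, Finset.mem_filter]
      refine ⟨hcC, fun i hiC hib => ?_⟩
      exact (not_linked_iff_min π i).mp (hsub i hiC) c hib.symm

lemma sum_fiber_clo (π : Equiv.Perm (Fin n)) (C : Finset (Fin n)) :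
    (∑ T ∈ ((Finset.univ : Finset (Fin n)).powerset.erase ∅).filter (fun T => clo π T = C),
      (-1 : ℤ) ^ T.card)
    = if C.Nonempty ∧ ∀ j ∈ C, ¬ Linked π j then (-1 : ℤ) ^ C.card else 0 := by
  classical
  by_cases hclo : clo π C = C
  · by_cases hCne : C.Nonempty
    · by_cases hmax : blockMax π C = C
      · -- fiber is exactly {C}
        rw [if_pos ⟨hCne, heads_of_closed_max π hclo hmax⟩]
        have hfib : ((Finset.univ : Finset (Fin n)).powerset.erase ∅).filter
            (fun T => clo π T = C) = {C} := by
          ext T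
          simp only [Finset.mem_filter, Finset.mem_erase, Finset.mem_powerset,
            Finset.mem_singleton]
          constructor
          · rintro ⟨-, hT⟩
            obtain ⟨hM, hTC⟩ := (clo_fiber_char π hclo T).mp hT
            exact Finset.Subset.antisymm hTC (hmax ▸ hM)
          · rintro rfl
            exact ⟨⟨Finset.nonempty_iff_ne_empty.mp hCne, Finset.subset_univ _⟩, hclo⟩
        rw [hfib, Finset.sum_singleton]
      · -- fiber is the interval [blockMax C, C], whose signed sum vanishes
        rw [if_neg (fun hg => hmax (closed_max_of_heads π hg.2).2)]
        set M := blockMax π C with hM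
        have hMC : M ⊆ C := Finset.filter_subset _ _
        have hMne : M.Nonempty := blockMax_nonempty π hCne
        have hfib : ((Finset.univ : Finset (Fin n)).powerset.erase ∅).filter
            (fun T => clo π T = C) = (C \ M).powerset.image (fun A => A ∪ M) := by
          ext T
          simp only [Finset.mem_filter, Finset.mem_erase, Finset.mem_powerset,
            Finset.mem_image]
          constructor
          · rintro ⟨-, hT⟩
            obtain ⟨hMT, hTC⟩ := (clo_fiber_char π hclo T).mp hT
            refine ⟨T \ M, Finset.sdiff_subset_sdiff hTC (Finset.Subset.refl M), ?_⟩
            rw [Finset.sdiff_union_self_eq_union, Finset.union_eq_left.mpr hMT]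
          · rintro ⟨A, hA, rfl⟩
            have hsub : A ∪ M ⊆ C := Finset.union_subset (hA.trans (Finset.sdiff_subset)) hMC
            refine ⟨⟨?_, Finset.subset_univ _⟩, ?_⟩
            · intro h
              obtain ⟨x, hx⟩ := hMne
              have : x ∈ A ∪ M := Finset.mem_union_right A hx
              rw [h] at this
              exact absurd this (Finset.notMem_empty x)
            · rw [clo_fiber_char π hclo]
              exact ⟨Finset.subset_union_right, hsub⟩
        rw [hfib, Finset.sum_image]
        · have hzero : ∀ A ∈ (C \ M).powerset, (-1 : ℤ) ^ (A ∪ M).card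
              = (-1 : ℤ) ^ M.card * (-1 : ℤ) ^ A.card := by
            intro A hA
            rw [Finset.mem_powerset] at hA
            have hdisj : Disjoint A M := Finset.disjoint_left.mpr
              (fun x hxA hxM => (Finset.mem_sdiff.mp (hA hxA)).2 hxM)
            rw [Finset.card_union_of_disjoint hdisj, pow_add]
            ring
          rw [Finset.sum_congr rfl hzero, ← Finset.mul_sum,
            Finset.sum_powerset_neg_one_pow_card, if_neg]
          · ring
          · intro h
            have hCM : C ⊆ M := Finset.sdiff_eq_empty_iff_subset.mp h
            exact hmax (Finset.Subset.antisymm hMC hCM)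
        · intro A hA B hB hAB
          have hA' : A ⊆ C \ M := Finset.mem_powerset.mp hA
          have hB' : B ⊆ C \ M := Finset.mem_powerset.mp hB
          ext x
          constructor
          · intro hxA
            have hx1 : x ∈ A ∪ M := Finset.mem_union_left M hxA
            rw [show A ∪ M = B ∪ M from hAB] at hx1
            rcases Finset.mem_union.mp hx1 with h | h
            · exact h
            · exact absurd h (Finset.mem_sdiff.mp (hA' hxA)).2
          · intro hxB
            have hx1 : x ∈ B ∪ M := Finset.mem_union_left M hxB
            rw [← show A ∪ M = B ∪ M from hAB] at hx1
            rcases Finset.mem_union.mp hx1 with h | h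
            · exact h
            · exact absurd h (Finset.mem_sdiff.mp (hB' hxB)).2
    · -- C empty: fiber empty
      rw [Finset.not_nonempty_iff_eq_empty] at hCne
      rw [if_neg (by rintro ⟨h, -⟩; rw [hCne] at h; exact Finset.not_nonempty_empty h)]
      rw [Finset.sum_eq_zero]
      intro T hT
      rw [Finset.mem_filter, Finset.mem_erase] at hT
      exfalso
      obtain ⟨⟨hTne, -⟩, hTC⟩ := hT
      obtain ⟨t, ht⟩ := Finset.nonempty_iff_ne_empty.mpr hTne
      have : t ∈ clo π T := subset_clo π T ht
      rw [hTC, hCne] at this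
      exact Finset.notMem_empty t this
  · -- C not closed: fiber empty, and C is not a set of heads either
    rw [if_neg (fun hg => hclo (closed_max_of_heads π hg.2).1)]
    rw [Finset.sum_eq_zero]
    intro T hT
    rw [Finset.mem_filter] at hT
    exact absurd (hT.2 ▸ clo_idem π T) hclo

lemma NE_eq_card {p : PermPat} (π : Equiv.Perm (Fin n)) :
    (NE p π : ℤ) = ((Finset.univ.filter
      (fun E : Finset (Fin n) => IsEmb p π E ∧ IsNormal π E)).card : ℤ) := by
  rw [NE]
  congr 1
  rw [show {E : Finset (Fin n) | IsEmb p π E ∧ IsNormal π E}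
      = ↑(Finset.univ.filter (fun E : Finset (Fin n) => IsEmb p π E ∧ IsNormal π E)) from ?_,
    Set.ncard_coe_finset]
  ext E
  simp

lemma step_E {k : ℕ} (σ : Equiv.Perm (Fin k)) (π : Equiv.Perm (Fin n)) (hkn : k < n) :
    (∑ T ∈ (Finset.univ : Finset (Fin n)).powerset.erase ∅,
      (-1 : ℤ) ^ T.card *
        (if patternOf π (Finset.univ \ clo π T) = ⟨k, σ⟩ then 1 else 0))
    = (-1 : ℤ) ^ (n - k) * (NE ⟨k, σ⟩ π : ℤ) := by
  classical
  -- group the sum according to the closure C = clo π T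
  rw [← Finset.sum_fiberwise_of_maps_to (g := clo π)
    (t := (Finset.univ : Finset (Finset (Fin n))))
    (fun T _ => Finset.mem_univ _)
    (fun T => (-1 : ℤ) ^ T.card *
      (if patternOf π (Finset.univ \ clo π T) = ⟨k, σ⟩ then 1 else 0))]
  have hfib : ∀ C ∈ (Finset.univ : Finset (Finset (Fin n))),
      (∑ T ∈ ((Finset.univ : Finset (Fin n)).powerset.erase ∅).filter (fun T => clo π T = C),
        (-1 : ℤ) ^ T.card *
          (if patternOf π (Finset.univ \ clo π T) = ⟨k, σ⟩ then 1 else 0))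
      = (if (C.Nonempty ∧ ∀ j ∈ C, ¬ Linked π j) ∧ patternOf π (Finset.univ \ C) = ⟨k, σ⟩
         then (-1 : ℤ) ^ C.card else 0) := by
    intro C _
    have hcong : ∀ T ∈ ((Finset.univ : Finset (Fin n)).powerset.erase ∅).filter
        (fun T => clo π T = C),
        (-1 : ℤ) ^ T.card * (if patternOf π (Finset.univ \ clo π T) = ⟨k, σ⟩ then 1 else 0)
        = (-1 : ℤ) ^ T.card * (if patternOf π (Finset.univ \ C) = ⟨k, σ⟩ then 1 else 0) := by
      intro T hT
      rw [(Finset.mem_filter.mp hT).2]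
    rw [Finset.sum_congr rfl hcong, ← Finset.sum_mul, sum_fiber_clo π C]
    by_cases h1 : C.Nonempty ∧ ∀ j ∈ C, ¬ Linked π j
    · rw [if_pos h1]
      by_cases h2 : patternOf π (Finset.univ \ C) = ⟨k, σ⟩
      · rw [if_pos h2, if_pos ⟨h1, h2⟩]; ring
      · rw [if_neg h2, if_neg (fun hh => h2 hh.2)]; ring
    · rw [if_neg h1, if_neg (show ¬((C.Nonempty ∧ ∀ j ∈ C, ¬ Linked π j) ∧
        patternOf π (Finset.univ \ C) = ⟨k, σ⟩) from fun hh => h1 hh.1)]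
      ring
  rw [Finset.sum_congr rfl hfib]
  -- identify the surviving C with complements of normal embeddings
  have hcard : ∀ C : Finset (Fin n), patternOf π (Finset.univ \ C) = ⟨k, σ⟩ → C.card = n - k := by
    intro C hC
    have h1 : (Finset.univ \ C).card = k := congrArg Sigma.fst hC
    have h2 : (Finset.univ \ C).card = n - C.card := by
      rw [Finset.card_sdiff_of_subset (Finset.subset_univ C), Finset.card_univ, Fintype.card_fin]
    have h3 : C.card ≤ n := by
      have := Finset.card_le_card (Finset.subset_univ C)
      rwa [Finset.card_univ, Fintype.card_fin] at this
    omega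
  have hsplit : (∑ C ∈ (Finset.univ : Finset (Finset (Fin n))),
      (if (C.Nonempty ∧ ∀ j ∈ C, ¬ Linked π j) ∧ patternOf π (Finset.univ \ C) = ⟨k, σ⟩
       then (-1 : ℤ) ^ C.card else 0))
      = ∑ C ∈ (Finset.univ : Finset (Finset (Fin n))).filter
          (fun C => (∀ j ∈ C, ¬ Linked π j) ∧ patternOf π (Finset.univ \ C) = ⟨k, σ⟩),
          (-1 : ℤ) ^ (n - k) := by
    rw [Finset.sum_filter]
    apply Finset.sum_congr rfl
    intro C _
    by_cases hc : (∀ j ∈ C, ¬ Linked π j) ∧ patternOf π (Finset.univ \ C) = ⟨k, σ⟩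
    · have hne : C.Nonempty := by
        rw [← Finset.card_pos, hcard C hc.2]
        omega
      rw [if_pos ⟨⟨hne, hc.1⟩, hc.2⟩, if_pos hc, hcard C hc.2]
    · rw [if_neg (fun hh => hc ⟨hh.1.2, hh.2⟩), if_neg hc]
  rw [hsplit, Finset.sum_const, nsmul_eq_mul, mul_comm]
  congr 1
  rw [NE_eq_card]
  congr 1
  refine Finset.card_bij' (fun C _ => Finset.univ \ C) (fun E _ => Finset.univ \ E)
    ?_ ?_ ?_ ?_
  · intro C hC
    rw [Finset.mem_filter] at hC
    obtain ⟨-, hheads, hpat⟩ := hC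
    rw [Finset.mem_filter]
    refine ⟨Finset.mem_univ _, hpat, fun j hj => ?_⟩
    rw [Finset.mem_sdiff]
    exact ⟨Finset.mem_univ j, fun hjC => hheads j hjC hj⟩
  · intro E hE
    rw [Finset.mem_filter] at hE
    obtain ⟨-, hemb, hnorm⟩ := hE
    rw [Finset.mem_filter]
    have hcompl : Finset.univ \ (Finset.univ \ E) = E := by
      rw [Finset.sdiff_sdiff_self_left, Finset.univ_inter]
    refine ⟨Finset.mem_univ _, fun j hj hLj => ?_, by rw [hcompl]; exact hemb⟩
    rw [Finset.mem_sdiff] at hj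
    exact hj.2 (hnorm j hLj)
  · intro C _
    show Finset.univ \ (Finset.univ \ C) = C
    rw [Finset.sdiff_sdiff_self_left, Finset.univ_inter]
  · intro E _
    show Finset.univ \ (Finset.univ \ E) = E
    rw [Finset.sdiff_sdiff_self_left, Finset.univ_inter]

end AuxCount


/-- For permutations `σ ≤ π` in the pattern poset,
`μ(σ,π) = (−1)^{|π|−|σ|}·NE(σ,π) + Σ_{σ ≤ λ < π} μ(σ,λ)·Σ_{S ∈ EZ^{λ,π}} (−1)^{|S|}`.
The permutations `λ` with `σ ≤ λ < π` are enumerated by their length `m`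
(any `λ < π` has length at most `n`). -/
theorem mobius_two_term_formula {k n : ℕ} (σ : Equiv.Perm (Fin k)) (π : Equiv.Perm (Fin n))
    (h : PatLe ⟨k, σ⟩ ⟨n, π⟩) :
    permMu ⟨k, σ⟩ ⟨n, π⟩ = (-1 : ℤ) ^ (n - k) * (NE ⟨k, σ⟩ π : ℤ) +
      ∑ m ∈ Finset.range (n + 1), ∑ z : Equiv.Perm (Fin m),
        (if PatLe ⟨k, σ⟩ ⟨m, z⟩ ∧ PatLe ⟨m, z⟩ ⟨n, π⟩ ∧ (⟨m, z⟩ : PermPat) ≠ ⟨n, π⟩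
         then permMu ⟨k, σ⟩ ⟨m, z⟩ * EZsum ⟨m, z⟩ π else 0) := by
  classical
  have hkn : k ≤ n := h.len_le
  rcases eq_or_lt_of_le hkn with heq | hlt
  · -- case k = n, so σ = π
    subst heq
    have hσπ : σ = π := patLe_len_eq h
    subst hσπ
    rw [permMu_self]
    have hsum0 : (∑ m ∈ Finset.range (k + 1), ∑ z : Equiv.Perm (Fin m),
        (if PatLe ⟨k, σ⟩ ⟨m, z⟩ ∧ PatLe ⟨m, z⟩ ⟨k, σ⟩ ∧ (⟨m, z⟩ : PermPat) ≠ ⟨k, σ⟩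
         then permMu ⟨k, σ⟩ ⟨m, z⟩ * EZsum ⟨m, z⟩ σ else 0)) = 0 := by
      apply Finset.sum_eq_zero
      intro m _
      apply Finset.sum_eq_zero
      intro z _
      rw [if_neg]
      rintro ⟨h1, h2, h3⟩
      exact h3 (patLe_eq_of_len h2 h1.len_le)
    rw [hsum0, add_zero]
    have hNE : (NE ⟨k, σ⟩ σ : ℤ) = 1 := by
      rw [NE_eq_card]
      have hfil : (Finset.univ.filter
          (fun E : Finset (Fin k) => IsEmb ⟨k, σ⟩ σ E ∧ IsNormal σ E))
          = {Finset.univ} := by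
        ext E
        simp only [Finset.mem_filter, Finset.mem_univ, true_and, Finset.mem_singleton]
        constructor
        · rintro ⟨hemb, -⟩
          apply Finset.eq_univ_of_card
          rw [Fintype.card_fin]
          exact congrArg Sigma.fst hemb
        · rintro rfl
          exact ⟨patternOf_univ σ, fun j _ => Finset.mem_univ j⟩
      rw [hfil, Finset.card_singleton]
      norm_num
    rw [hNE]
    norm_num
  · -- main case k < n
    have hn0 : 0 < n := lt_of_le_of_lt (Nat.zero_le k) hlt
    have hnePat : (⟨k, σ⟩ : PermPat) ≠ ⟨n, π⟩ := by
      intro he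
      have := congrArg Sigma.fst he
      simp only at this
      omega
    set TT : Finset (Finset (Fin n)) := (Finset.univ : Finset (Fin n)).powerset.erase ∅
      with hTT
    -- basic facts about ρ_T
    have hrho : ∀ T ∈ TT, PatLe (patternOf π (Finset.univ \ clo π T)) ⟨n, π⟩ ∧
        (patternOf π (Finset.univ \ clo π T)).1 < n := by
      intro T hT
      have hTne : T.Nonempty := Finset.nonempty_iff_ne_empty.mpr (Finset.mem_erase.mp hT).1
      have hCne : (clo π T).Nonempty := hTne.mono (subset_clo π T)
      constructor
      · rw [show (⟨n, π⟩ : PermPat) = patternOf π Finset.univ from (patternOf_univ π).symm]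
        exact patternOf_mono π (Finset.sdiff_subset)
      · rw [patternOf_fst, Finset.card_sdiff_of_subset (Finset.subset_univ _), Finset.card_univ,
          Fintype.card_fin]
        have h1 : 0 < (clo π T).card := Finset.card_pos.mpr hCne
        have h2 : (clo π T).card ≤ n := by
          have := Finset.card_le_card (Finset.subset_univ (clo π T))
          rwa [Finset.card_univ, Fintype.card_fin] at this
        omega
    -- Step B+C: pointwise expansion of μ(σ,λ)(1 + EZsum(λ,π)) as a sum over T
    have hstep1 : ∀ m ∈ Finset.range (n + 1), ∀ z : Equiv.Perm (Fin m),
        (if PatLe ⟨k, σ⟩ ⟨m, z⟩ ∧ PatLe ⟨m, z⟩ ⟨n, π⟩ ∧ (⟨m, z⟩ : PermPat) ≠ ⟨n, π⟩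
         then permMu ⟨k, σ⟩ ⟨m, z⟩ * (1 + EZsum ⟨m, z⟩ π) else 0)
        = ∑ T ∈ TT, -((-1 : ℤ) ^ T.card *
            (if PatLe ⟨k, σ⟩ ⟨m, z⟩ ∧ PatLe ⟨m, z⟩ (patternOf π (Finset.univ \ clo π T))
             then permMu ⟨k, σ⟩ ⟨m, z⟩ else 0)) := by
      intro m _ z
      by_cases hG : PatLe ⟨k, σ⟩ ⟨m, z⟩ ∧ PatLe ⟨m, z⟩ ⟨n, π⟩ ∧ (⟨m, z⟩ : PermPat) ≠ ⟨n, π⟩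
      · rw [if_pos hG, one_add_EZsum π z hn0 (ehat_nonempty hG.2.1), mul_neg,
          Finset.mul_sum, ← Finset.sum_neg_distrib]
        apply Finset.sum_congr rfl
        intro T _
        have hAv := ehat_avoid_iff π z T
        by_cases hav : PatLe ⟨m, z⟩ (patternOf π (Finset.univ \ clo π T))
        · rw [if_pos (hAv.mpr hav), if_pos ⟨hG.1, hav⟩]
          ring
        · rw [if_neg (fun hx => hav (hAv.mp hx)), if_neg (fun hx => hav hx.2)]
          ring
      · rw [if_neg hG]
        symm
        apply Finset.sum_eq_zero
        intro T hT
        rw [if_neg, mul_zero, neg_zero]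
        rintro ⟨h1, h2⟩
        obtain ⟨hρle, hρlt⟩ := hrho T hT
        refine hG ⟨h1, patLe_trans h2 hρle, fun he => ?_⟩
        have hm' : m = n := congrArg Sigma.fst he
        have hm'' : m ≤ (patternOf π (Finset.univ \ clo π T)).1 := h2.len_le
        omega
    -- the key identity
    have key : (∑ m ∈ Finset.range (n + 1), ∑ z : Equiv.Perm (Fin m),
        (if PatLe ⟨k, σ⟩ ⟨m, z⟩ ∧ PatLe ⟨m, z⟩ ⟨n, π⟩ ∧ (⟨m, z⟩ : PermPat) ≠ ⟨n, π⟩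
         then permMu ⟨k, σ⟩ ⟨m, z⟩ * (1 + EZsum ⟨m, z⟩ π) else 0))
        = -((-1 : ℤ) ^ (n - k) * (NE ⟨k, σ⟩ π : ℤ)) := by
      have e1 : (∑ m ∈ Finset.range (n + 1), ∑ z : Equiv.Perm (Fin m),
          (if PatLe ⟨k, σ⟩ ⟨m, z⟩ ∧ PatLe ⟨m, z⟩ ⟨n, π⟩ ∧ (⟨m, z⟩ : PermPat) ≠ ⟨n, π⟩
           then permMu ⟨k, σ⟩ ⟨m, z⟩ * (1 + EZsum ⟨m, z⟩ π) else 0))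
          = ∑ m ∈ Finset.range (n + 1), ∑ z : Equiv.Perm (Fin m), ∑ T ∈ TT,
            -((-1 : ℤ) ^ T.card *
              (if PatLe ⟨k, σ⟩ ⟨m, z⟩ ∧ PatLe ⟨m, z⟩ (patternOf π (Finset.univ \ clo π T))
               then permMu ⟨k, σ⟩ ⟨m, z⟩ else 0)) := by
        apply Finset.sum_congr rfl
        intro m hm
        apply Finset.sum_congr rfl
        intro z _
        exact hstep1 m hm z
      rw [e1]
      have e2 : (∑ m ∈ Finset.range (n + 1), ∑ z : Equiv.Perm (Fin m), ∑ T ∈ TT,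
          -((-1 : ℤ) ^ T.card *
            (if PatLe ⟨k, σ⟩ ⟨m, z⟩ ∧ PatLe ⟨m, z⟩ (patternOf π (Finset.univ \ clo π T))
             then permMu ⟨k, σ⟩ ⟨m, z⟩ else 0)))
          = ∑ T ∈ TT, ∑ m ∈ Finset.range (n + 1), ∑ z : Equiv.Perm (Fin m),
            -((-1 : ℤ) ^ T.card *
              (if PatLe ⟨k, σ⟩ ⟨m, z⟩ ∧ PatLe ⟨m, z⟩ (patternOf π (Finset.univ \ clo π T))
               then permMu ⟨k, σ⟩ ⟨m, z⟩ else 0)) := by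
        rw [show (∑ m ∈ Finset.range (n + 1), ∑ z : Equiv.Perm (Fin m), ∑ T ∈ TT,
            -((-1 : ℤ) ^ T.card *
              (if PatLe ⟨k, σ⟩ ⟨m, z⟩ ∧ PatLe ⟨m, z⟩ (patternOf π (Finset.univ \ clo π T))
               then permMu ⟨k, σ⟩ ⟨m, z⟩ else 0)))
            = ∑ m ∈ Finset.range (n + 1), ∑ T ∈ TT, ∑ z : Equiv.Perm (Fin m),
            -((-1 : ℤ) ^ T.card *
              (if PatLe ⟨k, σ⟩ ⟨m, z⟩ ∧ PatLe ⟨m, z⟩ (patternOf π (Finset.univ \ clo π T))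
               then permMu ⟨k, σ⟩ ⟨m, z⟩ else 0)) from
          Finset.sum_congr rfl (fun m _ => Finset.sum_comm)]
        exact Finset.sum_comm
      rw [e2]
      have e3 : ∀ T ∈ TT, (∑ m ∈ Finset.range (n + 1), ∑ z : Equiv.Perm (Fin m),
          -((-1 : ℤ) ^ T.card *
            (if PatLe ⟨k, σ⟩ ⟨m, z⟩ ∧ PatLe ⟨m, z⟩ (patternOf π (Finset.univ \ clo π T))
             then permMu ⟨k, σ⟩ ⟨m, z⟩ else 0)))
          = -((-1 : ℤ) ^ T.card *
              (if patternOf π (Finset.univ \ clo π T) = ⟨k, σ⟩ then 1 else 0)) := by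
        intro T hT
        have hρn : (patternOf π (Finset.univ \ clo π T)).1 ≤ n := le_of_lt (hrho T hT).2
        have hmu := mu_interval_sum σ (patternOf π (Finset.univ \ clo π T)) hρn
        calc (∑ m ∈ Finset.range (n + 1), ∑ z : Equiv.Perm (Fin m),
            -((-1 : ℤ) ^ T.card *
              (if PatLe ⟨k, σ⟩ ⟨m, z⟩ ∧ PatLe ⟨m, z⟩ (patternOf π (Finset.univ \ clo π T))
               then permMu ⟨k, σ⟩ ⟨m, z⟩ else 0)))
            = -((-1 : ℤ) ^ T.card * ∑ m ∈ Finset.range (n + 1), ∑ z : Equiv.Perm (Fin m),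
              (if PatLe ⟨k, σ⟩ ⟨m, z⟩ ∧ PatLe ⟨m, z⟩ (patternOf π (Finset.univ \ clo π T))
               then permMu ⟨k, σ⟩ ⟨m, z⟩ else 0)) := by
              rw [Finset.mul_sum, ← Finset.sum_neg_distrib]
              apply Finset.sum_congr rfl
              intro m _
              rw [Finset.mul_sum, ← Finset.sum_neg_distrib]
          _ = -((-1 : ℤ) ^ T.card *
              (if (⟨k, σ⟩ : PermPat) = patternOf π (Finset.univ \ clo π T) then 1 else 0)) := by
              rw [hmu]
          _ = -((-1 : ℤ) ^ T.card *
              (if patternOf π (Finset.univ \ clo π T) = ⟨k, σ⟩ then 1 else 0)) := by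
              rw [if_congr (eq_comm) rfl rfl]
      rw [Finset.sum_congr rfl e3, Finset.sum_neg_distrib]
      congr 1
      exact step_E σ π hlt
    -- assemble
    rw [permMu_rec' σ π h hnePat]
    have hsplit : (∑ m ∈ Finset.range (n + 1), ∑ z : Equiv.Perm (Fin m),
        (if PatLe ⟨k, σ⟩ ⟨m, z⟩ ∧ PatLe ⟨m, z⟩ ⟨n, π⟩ ∧ (⟨m, z⟩ : PermPat) ≠ ⟨n, π⟩
         then permMu ⟨k, σ⟩ ⟨m, z⟩ * (1 + EZsum ⟨m, z⟩ π) else 0))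
        = (∑ m ∈ Finset.range (n + 1), ∑ z : Equiv.Perm (Fin m),
            (if PatLe ⟨k, σ⟩ ⟨m, z⟩ ∧ PatLe ⟨m, z⟩ ⟨n, π⟩ ∧ (⟨m, z⟩ : PermPat) ≠ ⟨n, π⟩
             then permMu ⟨k, σ⟩ ⟨m, z⟩ else 0))
          + ∑ m ∈ Finset.range (n + 1), ∑ z : Equiv.Perm (Fin m),
            (if PatLe ⟨k, σ⟩ ⟨m, z⟩ ∧ PatLe ⟨m, z⟩ ⟨n, π⟩ ∧ (⟨m, z⟩ : PermPat) ≠ ⟨n, π⟩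
             then permMu ⟨k, σ⟩ ⟨m, z⟩ * EZsum ⟨m, z⟩ π else 0) := by
      rw [← Finset.sum_add_distrib]
      apply Finset.sum_congr rfl
      intro m _
      rw [← Finset.sum_add_distrib]
      apply Finset.sum_congr rfl
      intro z _
      by_cases hG : PatLe ⟨k, σ⟩ ⟨m, z⟩ ∧ PatLe ⟨m, z⟩ ⟨n, π⟩ ∧ (⟨m, z⟩ : PermPat) ≠ ⟨n, π⟩
      · rw [if_pos hG, if_pos hG, if_pos hG]
        ring
      · rw [if_neg hG, if_neg hG, if_neg hG]
        ring
    rw [hsplit] at key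
    linarith [key]
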